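/- arXiv:1901.01694 — 2 statements merged into one kernel-verified Lean document; each statement's English description precedes it below -/
import Mathlib

section
/- Pliss Lemma: Let b₀ ≤ c₂ < c₁ be real numbers and set θ = (c₁ - c₂)/(c₁ - b₀). Given real numbers b₁, …, b_T with ∑_{i=1}^T bᵢ ≤ c₂·T and bᵢ ≥ b₀ for every i, there exist τ ≥ θ·T and indices 1 ≤ k₁ < k₂ < ⋯ < k_τ ≤ T such that for every 1 ≤ j ≤ τ and every 0 ≤ k < k_j one has ∑_{i=k+1}^{k_j} bᵢ ≤ c₁·(k_j - k). -/
/-- **Pliss Lemma.** Let `b₀ ≤ c₂ < c₁` and `θ = (c₁ - c₂)/(c₁ - b₀)`. Given reals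
`b 1, …, b T` with `∑_{i=1}^T b i ≤ c₂ T` and `b i ≥ b₀` for every `i`, there exist
`τ ≥ θ T` and indices `1 ≤ k₁ < ⋯ < k_τ ≤ T` such that
`∑_{i=k+1}^{k_j} b i ≤ c₁ (k_j - k)` for all `0 ≤ k < k_j` and `1 ≤ j ≤ τ`. -/
theorem pliss_lemma (b₀ c₁ c₂ θ : ℝ) (hb : b₀ ≤ c₂) (hc : c₂ < c₁)
    (hθ : θ = (c₁ - c₂) / (c₁ - b₀))
    (T : ℕ) (hT : 0 < T) (b : ℕ → ℝ)
    (hsum : ∑ i ∈ Finset.Icc 1 T, b i ≤ c₂ * T)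
    (hlb : ∀ i ∈ Finset.Icc 1 T, b₀ ≤ b i) :
    ∃ τ : ℕ, θ * T ≤ τ ∧ ∃ k : Fin τ → ℕ, StrictMono k ∧
      (∀ j, k j ∈ Finset.Icc 1 T) ∧
      ∀ j : Fin τ, ∀ m : ℕ, m < k j →
        ∑ i ∈ Finset.Icc (m + 1) (k j), b i ≤ c₁ * ((k j : ℝ) - (m : ℝ)) := by
  classical
  set S : ℕ → ℝ := fun n => ∑ i ∈ Finset.Ioc 0 n, (b i - c₁) with hSdef
  set P : ℕ → Prop := fun n => ∀ m < n, S n ≤ S m with hPdef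
  set K : Finset ℕ := (Finset.Icc 1 T).filter P with hKdef
  have hIcc : ∀ a b : ℕ, Finset.Icc (a+1) b = Finset.Ioc a b := fun a b => Finset.Icc_add_one_left_eq_Ioc a b
  have hSstep : ∀ n, S (n+1) = S n + (b (n+1) - c₁) := by
    intro n
    simp only [hSdef]
    rw [Finset.sum_Ioc_succ_top (Nat.zero_le n)]
  have key : ∀ n, n ≤ T → ∀ m ≤ n,
      (((Finset.Icc 1 n).filter P).card : ℝ) * (b₀ - c₁) ≤ S m := by
    intro n
    induction n with
    | zero =>
      intro _ m hm
      interval_cases m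
      simp [hSdef]
    | succ n ih =>
      intro hn m hm
      have hn' : n ≤ T := Nat.le_of_succ_le hn
      have ihn := ih hn'
      have hsplit : Finset.Icc 1 (n+1) = insert (n+1) (Finset.Icc 1 n) := by
        ext x; simp [Nat.lt_succ_iff]; omega
      have hnotmem : n+1 ∉ Finset.Icc 1 n := by simp
      by_cases hp : P (n+1)
      · have hcard : ((Finset.Icc 1 (n+1)).filter P).card
            = ((Finset.Icc 1 n).filter P).card + 1 := by
          rw [hsplit, Finset.filter_insert, if_pos hp,
            Finset.card_insert_of_notMem (fun h => hnotmem (Finset.mem_filter.mp h).1)]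
        have hb1 : b₀ ≤ b (n+1) := hlb (n+1) (Finset.mem_Icc.mpr ⟨by omega, hn⟩)
        have hSn := ihn n le_rfl
        rcases Nat.lt_succ_iff_lt_or_eq.mp (Nat.lt_succ_of_le hm) with h | h
        · have := ihn m (by omega)
          rw [hcard]
          push_cast
          nlinarith
        · subst h
          rw [hcard, hSstep]
          push_cast
          nlinarith
      · have hcard : ((Finset.Icc 1 (n+1)).filter P).card
            = ((Finset.Icc 1 n).filter P).card := by
          rw [hsplit, Finset.filter_insert, if_neg hp]
        rw [hcard]
        rcases Nat.lt_succ_iff_lt_or_eq.mp (Nat.lt_succ_of_le hm) with h | h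
        · exact ihn m (by omega)
        · subst h
          simp only [hPdef] at hp
          push_neg at hp
          obtain ⟨m', hm', hSm'⟩ := hp
          have := ihn m' (by omega)
          linarith
  -- the total count bound
  have hST : S T ≤ (c₂ - c₁) * T := by
    have : S T = (∑ i ∈ Finset.Icc 1 T, b i) - c₁ * T := by
      simp only [hSdef, ← hIcc 0 T]
      rw [Finset.sum_sub_distrib, Finset.sum_const, Nat.card_Icc]
      simp [nsmul_eq_mul]
      ring
    rw [this]; linarith
  have hmain : (K.card : ℝ) * (b₀ - c₁) ≤ (c₂ - c₁) * T :=
    le_trans (key T le_rfl T le_rfl) hST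
  refine ⟨K.card, ?_, fun j => K.orderEmbOfFin rfl j,
    (K.orderEmbOfFin rfl).strictMono, ?_, ?_⟩
  · rw [hθ, div_mul_eq_mul_div, div_le_iff₀ (by linarith)]
    nlinarith
  · intro j
    exact (Finset.mem_filter.mp (Finset.orderEmbOfFin_mem K rfl j)).1
  · intro j m hm
    have hK := Finset.orderEmbOfFin_mem K rfl j
    have hPj : P (K.orderEmbOfFin rfl j) := (Finset.mem_filter.mp hK).2
    set kj := (K.orderEmbOfFin rfl j : ℕ) with hkj
    have hle : S kj ≤ S m := hPj m hm
    have hcons : (∑ i ∈ Finset.Ioc 0 m, (b i - c₁))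
        + ∑ i ∈ Finset.Ioc m kj, (b i - c₁) = ∑ i ∈ Finset.Ioc 0 kj, (b i - c₁) :=
      Finset.sum_Ioc_consecutive _ (Nat.zero_le m) hm.le
    have hneg : ∑ i ∈ Finset.Ioc m kj, (b i - c₁) ≤ 0 := by
      have h1 : S kj = ∑ i ∈ Finset.Ioc 0 kj, (b i - c₁) := rfl
      have h2 : S m = ∑ i ∈ Finset.Ioc 0 m, (b i - c₁) := rfl
      linarith [hcons]
    have hexp : ∑ i ∈ Finset.Ioc m kj, (b i - c₁)
        = (∑ i ∈ Finset.Ioc m kj, b i) - ((kj : ℝ) - m) * c₁ := by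
      rw [Finset.sum_sub_distrib, Finset.sum_const, Nat.card_Ioc, nsmul_eq_mul,
        Nat.cast_sub hm.le]
    rw [hIcc m kj]
    linarith
end

section
/- Iterated cover growth estimate: let f be a homeomorphism of a compact metric space, N a positive integer, and suppose (V_t)_{t≥0} are subsets such that V_0 is covered by k(0) sets of diameter ≤ 2η, and for each t and each set A of diameter ≤ 2η contained in V_t, the image f^N(A) ∩ V_{t+1} is covered by at most m_t sets of diameter ≤ 2η, where m_t ≤ C·e^{2/N}·M_t for constants C ≥ 1 and reals M_t ≥ 1. Then the limsup exponential growth rate of the minimal (n, 2η)-spanning number of V₀ under f^N satisfies limsup_n (1/(nN)) log r_n(f^N, V₀ ∩ (⋂preimages of V_t), 2η) ≤ (2 + log C)/N + limsup_n (1/(nN)) ∑_{t=0}^{n−2} log M_t. -/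
open Filter Metric Set

variable {M : Type*} [MetricSpace M]

/-- `S` is an `(n, ε)`-spanning set for `K` under the map `g`. -/
def IsSpanningSet (g : M → M) (K : Set M) (n : ℕ) (ε : ℝ) (S : Finset M) : Prop :=
  ∀ x ∈ K, ∃ y ∈ S, ∀ i < n, dist (g^[i] x) (g^[i] y) ≤ ε

/-- `r_n(g, K, ε)`: the minimal cardinality of an `(n, ε)`-spanning set for `K`. -/
noncomputable def spanNum (g : M → M) (K : Set M) (n : ℕ) (ε : ℝ) : ℕ :=
  sInf {k | ∃ S : Finset M, S.card = k ∧ IsSpanningSet g K n ε S}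

lemma spanNum_le_of_cover [CompactSpace M] (g : M → M) (K : Set M) (n : ℕ) (ε : ℝ) (c : ℕ)
    (𝒲 : Finset (Set M)) (hcard : 𝒲.card ≤ c)
    (hdiam : ∀ W ∈ 𝒲, ∀ i < n, Metric.diam (g^[i] '' W) ≤ ε)
    (hcov : K ⊆ ⋃₀ (𝒲 : Set (Set M))) :
    spanNum g K n ε ≤ c := by
  classical
  rcases isEmpty_or_nonempty M with hM | hM
  · have hsp : IsSpanningSet g K n ε ∅ := fun x _ => (IsEmpty.false x).elim
    exact le_trans (Nat.sInf_le ⟨∅, rfl, hsp⟩) (Nat.zero_le c)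
  · obtain ⟨x0⟩ := hM
    set pick : Set M → M := fun W => if h : W.Nonempty then h.some else x0 with hpick
    set S : Finset M := 𝒲.image pick with hS
    have hsp : IsSpanningSet g K n ε S := by
      intro x hx
      obtain ⟨W, hW, hxW⟩ := hcov hx
      have hWne : W.Nonempty := ⟨x, hxW⟩
      refine ⟨pick W, Finset.mem_image_of_mem pick hW, fun i hi => ?_⟩
      have hy : pick W ∈ W := by
        simp only [hpick, dif_pos hWne]; exact hWne.some_mem
      calc dist (g^[i] x) (g^[i] (pick W))
          ≤ Metric.diam (g^[i] '' W) :=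
            Metric.dist_le_diam_of_mem isBounded_of_compactSpace
              (mem_image_of_mem _ hxW) (mem_image_of_mem _ hy)
        _ ≤ ε := hdiam W hW i hi
    exact le_trans (Nat.sInf_le ⟨S, rfl, hsp⟩) (le_trans (Finset.card_image_le) hcard)

lemma exists_iter_cover [CompactSpace M] (g : M → M) (η : ℝ)
    (V : ℕ → Set M) (m : ℕ → ℕ) (k0 : ℕ)
    (hcov0 : ∃ 𝒰 : Finset (Set M), 𝒰.card ≤ k0 ∧
      (∀ A ∈ 𝒰, Metric.diam A ≤ 2 * η) ∧ V 0 ⊆ ⋃₀ (𝒰 : Set (Set M)))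
    (hstep : ∀ t : ℕ, ∀ A : Set M, A ⊆ V t → Metric.diam A ≤ 2 * η →
      ∃ 𝒱 : Finset (Set M), 𝒱.card ≤ m t ∧
        (∀ B ∈ 𝒱, Metric.diam B ≤ 2 * η) ∧
        (g '' A) ∩ V (t + 1) ⊆ ⋃₀ (𝒱 : Set (Set M))) :
    ∀ n : ℕ, 1 ≤ n → ∃ 𝒲 : Finset (Set M),
      𝒲.card ≤ k0 * ∏ t ∈ Finset.range (n - 1), m t ∧
      (∀ W ∈ 𝒲, ∀ i < n, Metric.diam (g^[i] '' W) ≤ 2 * η ∧ g^[i] '' W ⊆ V i) ∧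
      {x | ∀ t < n, g^[t] x ∈ V t} ⊆ ⋃₀ (𝒲 : Set (Set M)) := by
  classical
  intro n hn
  induction n, hn using Nat.le_induction with
  | base =>
    obtain ⟨𝒰, hcard, hdiam, hcov⟩ := hcov0
    refine ⟨𝒰.image (· ∩ V 0), ?_, ?_, ?_⟩
    · simpa using le_trans Finset.card_image_le hcard
    · intro W hW i hi
      interval_cases i
      obtain ⟨A, hA, rfl⟩ := Finset.mem_image.1 hW
      simp only [Function.iterate_zero, image_id]
      exact ⟨le_trans (Metric.diam_mono inter_subset_left isBounded_of_compactSpace)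
        (hdiam A hA), inter_subset_right⟩
    · intro x hx
      have hx0 : x ∈ V 0 := by simpa using hx 0 one_pos
      obtain ⟨A, hA, hxA⟩ := hcov hx0
      exact ⟨A ∩ V 0, by simpa using Finset.mem_image_of_mem _ hA, hxA, hx0⟩
  | succ n hn1 ih =>
    obtain ⟨𝒲, hcard, hprop, hcov⟩ := ih
    -- choice of refining covers
    set F : Set M → Finset (Set M) := fun W =>
      if h : g^[n-1] '' W ⊆ V (n-1) ∧ Metric.diam (g^[n-1] '' W) ≤ 2 * η then
        (hstep (n-1) (g^[n-1] '' W) h.1 h.2).choose else ∅ with hF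
    have hFspec : ∀ W ∈ 𝒲, (F W).card ≤ m (n-1) ∧
        (∀ B ∈ F W, Metric.diam B ≤ 2 * η) ∧
        (g '' (g^[n-1] '' W)) ∩ V (n-1+1) ⊆ ⋃₀ ((F W : Set (Set M))) := by
      intro W hW
      have h : g^[n-1] '' W ⊆ V (n-1) ∧ Metric.diam (g^[n-1] '' W) ≤ 2 * η := by
        have := hprop W hW (n-1) (by omega)
        exact ⟨this.2, this.1⟩
      rw [hF]; simp only [dif_pos h]
      exact (hstep (n-1) (g^[n-1] '' W) h.1 h.2).choose_spec
    have hn1' : n - 1 + 1 = n := Nat.succ_pred_eq_of_pos hn1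
    refine ⟨𝒲.biUnion (fun W => (F W).image (fun B => W ∩ g^[n] ⁻¹' (B ∩ V n))), ?_, ?_, ?_⟩
    · calc (𝒲.biUnion _).card ≤ ∑ W ∈ 𝒲, ((F W).image (fun B => W ∩ g^[n] ⁻¹' (B ∩ V n))).card :=
            Finset.card_biUnion_le
        _ ≤ ∑ W ∈ 𝒲, m (n-1) := Finset.sum_le_sum (fun W hW =>
            le_trans Finset.card_image_le (hFspec W hW).1)
        _ = 𝒲.card * m (n-1) := by rw [Finset.sum_const, smul_eq_mul]
        _ ≤ (k0 * ∏ t ∈ Finset.range (n-1), m t) * m (n-1) :=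
            Nat.mul_le_mul_right _ hcard
        _ = k0 * ∏ t ∈ Finset.range (n+1-1), m t := by
            rw [mul_assoc, ← Finset.prod_range_succ, Nat.add_sub_cancel]
            conv_rhs => rw [← hn1']
    · intro W' hW' i hi
      obtain ⟨W, hW, hBW⟩ := Finset.mem_biUnion.1 hW'
      obtain ⟨B, hB, rfl⟩ := Finset.mem_image.1 hBW
      rcases Nat.lt_or_ge i n with hin | hin
      · have h1 := hprop W hW i hin
        have hsub : g^[i] '' (W ∩ g^[n] ⁻¹' (B ∩ V n)) ⊆ g^[i] '' W :=
          Set.image_mono inter_subset_left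
        exact ⟨le_trans (Metric.diam_mono hsub isBounded_of_compactSpace) h1.1,
          hsub.trans h1.2⟩
      · have hieq : i = n := by omega
        subst hieq
        have hsub : g^[i] '' (W ∩ g^[i] ⁻¹' (B ∩ V i)) ⊆ B ∩ V i := by
          rintro y ⟨x, ⟨_, hx2⟩, rfl⟩; exact hx2
        exact ⟨le_trans (Metric.diam_mono (hsub.trans inter_subset_left)
          isBounded_of_compactSpace) ((hFspec W hW).2.1 B hB),
          hsub.trans inter_subset_right⟩
    · intro x hx
      have hxn : x ∈ {x | ∀ t < n, g^[t] x ∈ V t} := fun t ht => hx t (by omega)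
      obtain ⟨W, hW, hxW⟩ := hcov hxn
      have hW𝒲 : W ∈ 𝒲 := hW
      have hmem : g^[n] x ∈ (g '' (g^[n-1] '' W)) ∩ V (n-1+1) := by
        rw [hn1']
        refine ⟨?_, hx n (by omega)⟩
        rw [← Set.image_comp]
        exact ⟨x, hxW, by
          rw [Function.comp_apply]
          have h2 := Function.iterate_succ_apply' g (n-1) x
          rw [Nat.succ_eq_add_one, hn1'] at h2
          exact h2.symm⟩
      obtain ⟨B, hB, hgB⟩ := (hFspec W hW𝒲).2.2 hmem
      refine ⟨W ∩ g^[n] ⁻¹' (B ∩ V n), ?_, hxW, ?_⟩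
      · exact Finset.mem_coe.2 (Finset.mem_biUnion.2 ⟨W, hW𝒲,
          Finset.mem_image_of_mem _ hB⟩)
      · exact ⟨hgB, hx n (by omega)⟩

/-- Iterated cover growth estimate: if `V 0` is covered by `k0` sets of diameter
`≤ 2η`, and for each `t` the `f^N`-image of any set `A ⊆ V t` of diameter `≤ 2η`,
intersected with `V (t+1)`, is covered by at most `m t ≤ C e^{2/N} M t` sets of
diameter `≤ 2η`, then
`limsup_n (1/(nN)) log r_n(f^N, {x : f^{tN} x ∈ V t, 0 ≤ t ≤ n-1}, 2η)
  ≤ (2 + log C)/N + limsup_n (1/(nN)) ∑_{t=0}^{n-2} log (M t)`. -/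
theorem iterated_cover_growth [CompactSpace M] (f : M ≃ₜ M) (N : ℕ) (hN : 0 < N)
    (η : ℝ) (hη : 0 < η) (V : ℕ → Set M) (C : ℝ) (hC : 1 ≤ C)
    (Mt : ℕ → ℝ) (hMt : ∀ t, 1 ≤ Mt t) (m : ℕ → ℕ) (k0 : ℕ)
    (hcov0 : ∃ 𝒰 : Finset (Set M), 𝒰.card ≤ k0 ∧
      (∀ A ∈ 𝒰, Metric.diam A ≤ 2 * η) ∧ V 0 ⊆ ⋃₀ (𝒰 : Set (Set M)))
    (hstep : ∀ t : ℕ, ∀ A : Set M, A ⊆ V t → Metric.diam A ≤ 2 * η →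
      ∃ 𝒱 : Finset (Set M), 𝒱.card ≤ m t ∧
        (∀ B ∈ 𝒱, Metric.diam B ≤ 2 * η) ∧
        ((⇑f)^[N] '' A) ∩ V (t + 1) ⊆ ⋃₀ (𝒱 : Set (Set M)))
    (hm : ∀ t, (m t : ℝ) ≤ C * Real.exp (2 / N) * Mt t) :
    Filter.limsup
        (fun n : ℕ =>
          ((Real.log (spanNum ((⇑f)^[N]) {x | ∀ t < n, (⇑f)^[t * N] x ∈ V t} n (2 * η)) /
              (n * N) : ℝ) : EReal))
        Filter.atTop ≤
      (((2 + Real.log C) / N : ℝ) : EReal) +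
        Filter.limsup
          (fun n : ℕ =>
            (((∑ t ∈ Finset.range (n - 1), Real.log (Mt t)) / (n * N) : ℝ) : EReal))
          Filter.atTop := by
  classical
  set g : M → M := (⇑f)^[N] with hg
  have hNR : (0:ℝ) < N := by exact_mod_cast hN
  have hexp1 : (1:ℝ) ≤ Real.exp (2 / N) := Real.one_le_exp (by positivity)
  -- the counting bound
  have hcount : ∀ n : ℕ, 1 ≤ n →
      spanNum g {x | ∀ t < n, (⇑f)^[t * N] x ∈ V t} n (2 * η) ≤
        k0 * ∏ t ∈ Finset.range (n - 1), m t := by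
    intro n hn
    obtain ⟨𝒲, hcard, hprop, hcov⟩ := exists_iter_cover g η V m k0 hcov0 hstep n hn
    refine spanNum_le_of_cover g _ n (2*η) _ 𝒲 hcard (fun W hW i hi => (hprop W hW i hi).1) ?_
    intro x hx
    refine hcov ?_
    intro t ht
    have := hx t ht
    rwa [mul_comm, Function.iterate_mul] at this
  -- abbreviations
  set r : ℕ → ℕ := fun n => spanNum g {x | ∀ t < n, (⇑f)^[t * N] x ∈ V t} n (2 * η) with hrdef
  set u : ℕ → ℝ := fun n => Real.log (k0 + 1) / (n * N) with hu
  set c : ℝ := (2 + Real.log C) / N with hcdef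
  set d : ℕ → ℝ := fun n => (∑ t ∈ Finset.range (n - 1), Real.log (Mt t)) / (n * N) with hd
  -- real inequality
  have hreal : ∀ n : ℕ, 1 ≤ n → Real.log (r n) / (n * N) ≤ u n + (c + d n) := by
    intro n hn
    have hnR : (0:ℝ) < n := by exact_mod_cast hn
    have hden : (0:ℝ) < (n:ℝ) * N := by positivity
    set P : ℝ := ∏ t ∈ Finset.range (n - 1), (C * Real.exp (2 / N) * Mt t) with hP
    have hfac : ∀ t, (1:ℝ) ≤ C * Real.exp (2 / N) * Mt t := by
      intro t
      have h1 : (1:ℝ) ≤ C * Real.exp (2 / N) := by nlinarith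
      nlinarith [hMt t]
    have hP1 : (1:ℝ) ≤ P := by
      have := Finset.prod_le_prod (f := fun _ : ℕ => (1:ℝ))
        (g := fun t => C * Real.exp (2 / N) * Mt t) (s := Finset.range (n-1))
        (fun t _ => zero_le_one) (fun t _ => hfac t)
      simpa using this
    have hk0 : (0:ℝ) ≤ (k0:ℝ) := k0.cast_nonneg
    have hk1 : (1:ℝ) ≤ (k0:ℝ) + 1 := by linarith
    have hrP : (r n : ℝ) ≤ ((k0:ℝ) + 1) * P := by
      have h0 : (r n : ℝ) ≤ (k0:ℝ) * ∏ t ∈ Finset.range (n - 1), (m t : ℝ) := by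
        have := hcount n hn
        push_cast
        exact_mod_cast this
      have h1 : (∏ t ∈ Finset.range (n - 1), (m t : ℝ)) ≤ P :=
        Finset.prod_le_prod (fun t _ => (m t).cast_nonneg) (fun t _ => hm t)
      calc (r n : ℝ) ≤ (k0:ℝ) * ∏ t ∈ Finset.range (n - 1), (m t : ℝ) := h0
        _ ≤ ((k0:ℝ) + 1) * P := by
            refine mul_le_mul (by linarith) h1 (Finset.prod_nonneg fun t _ => (m t).cast_nonneg)
              (by positivity)
    have hlogle : Real.log (r n) ≤ Real.log (((k0:ℝ) + 1) * P) := by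
      rcases Nat.eq_zero_or_pos (r n) with h0 | hpos
      · rw [h0]
        simp only [Nat.cast_zero, Real.log_zero]
        exact Real.log_nonneg (by nlinarith)
      · exact Real.log_le_log (by exact_mod_cast hpos) hrP
    have hlogP : Real.log P = ∑ t ∈ Finset.range (n - 1),
        (Real.log C + 2 / N + Real.log (Mt t)) := by
      rw [hP, Real.log_prod]
      · refine Finset.sum_congr rfl fun t _ => ?_
        rw [Real.log_mul (by positivity) (by nlinarith [hMt t]),
          Real.log_mul (by positivity) (Real.exp_ne_zero _), Real.log_exp]
      · intro t _
        have := hfac t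
        positivity
    have hlogsplit : Real.log (((k0:ℝ) + 1) * P) =
        Real.log ((k0:ℝ) + 1) + ((n - 1 : ℕ) : ℝ) * (Real.log C + 2 / N) +
          ∑ t ∈ Finset.range (n - 1), Real.log (Mt t) := by
      rw [Real.log_mul (by positivity) (by positivity), hlogP, Finset.sum_add_distrib,
        Finset.sum_const, Finset.card_range, nsmul_eq_mul, add_assoc]
    have hmid : ((n - 1 : ℕ) : ℝ) * (Real.log C + 2 / N) / ((n:ℝ) * N) ≤ c := by
      have h1 : ((n - 1 : ℕ) : ℝ) ≤ (n : ℝ) := by exact_mod_cast Nat.sub_le n 1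
      have h2 : Real.log C + 2 / N ≤ 2 + Real.log C := by
        have : 2 / (N:ℝ) ≤ 2 := by
          rw [div_le_iff₀ hNR]; nlinarith [hNR, (by exact_mod_cast hN : (1:ℝ) ≤ N)]
        linarith
      have h3 : (0:ℝ) ≤ Real.log C + 2 / N := by
        have := Real.log_nonneg hC
        positivity
      have h4 : (0:ℝ) ≤ 2 + Real.log C := by linarith
      calc ((n - 1 : ℕ) : ℝ) * (Real.log C + 2 / N) / ((n:ℝ) * N)
          ≤ (n:ℝ) * (2 + Real.log C) / ((n:ℝ) * N) := by
            gcongr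
        _ = (2 + Real.log C) / N := mul_div_mul_left _ _ (ne_of_gt hnR)
    calc Real.log (r n) / ((n:ℝ) * N)
        ≤ (Real.log ((k0:ℝ) + 1) + ((n - 1 : ℕ) : ℝ) * (Real.log C + 2 / N) +
            ∑ t ∈ Finset.range (n - 1), Real.log (Mt t)) / ((n:ℝ) * N) := by
          gcongr
          rw [← hlogsplit]; exact hlogle
      _ = u n + (((n - 1 : ℕ) : ℝ) * (Real.log C + 2 / N) / ((n:ℝ) * N) + d n) := by
          rw [hu, hd]; push_cast; ring
      _ ≤ u n + (c + d n) := by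
          have := hmid; gcongr
  -- pass to EReal limsups
  have hmono : Filter.limsup (fun n : ℕ => ((Real.log (r n) / (n * N) : ℝ) : EReal)) atTop ≤
      Filter.limsup (fun n : ℕ =>
        ((fun k : ℕ => ((u k : ℝ) : EReal)) n + ((c + d n : ℝ) : EReal))) atTop := by
    refine Filter.limsup_le_limsup ?_
    filter_upwards [Filter.eventually_ge_atTop 1] with n hn
    have := hreal n hn
    rw [← EReal.coe_add]
    exact_mod_cast this
  have hu0 : Filter.limsup (fun n : ℕ => ((u n : ℝ) : EReal)) atTop = (0 : EReal) := by
    have huu : u = fun n : ℕ => (Real.log (k0 + 1) / N) / (n : ℝ) := by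
      funext n; rw [hu, div_div, mul_comm]
    have ht : Tendsto u atTop (nhds 0) := by
      rw [huu]; exact tendsto_const_div_atTop_nhds_zero_nat _
    have : Tendsto (fun n : ℕ => ((u n : ℝ) : EReal)) atTop (nhds ((0:ℝ) : EReal)) :=
      EReal.tendsto_coe.2 ht
    rw [EReal.coe_zero] at this
    exact this.limsup_eq
  have hsum1 : Filter.limsup (fun n : ℕ =>
      ((fun k : ℕ => ((u k : ℝ) : EReal)) n + ((c + d n : ℝ) : EReal))) atTop ≤
      Filter.limsup (fun n : ℕ => ((u n : ℝ) : EReal)) atTop +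
        Filter.limsup (fun n : ℕ => ((c + d n : ℝ) : EReal)) atTop := by
    refine EReal.limsup_add_le ?_ ?_
    · left; rw [hu0]; exact EReal.zero_ne_bot
    · left; rw [hu0]; exact EReal.zero_ne_top
  have hsum2 : Filter.limsup (fun n : ℕ => ((c + d n : ℝ) : EReal)) atTop ≤
      ((c : ℝ) : EReal) + Filter.limsup (fun n : ℕ => ((d n : ℝ) : EReal)) atTop := by
    have heq : (fun n : ℕ => ((c + d n : ℝ) : EReal)) =
        (fun n : ℕ => ((c : ℝ) : EReal)) + (fun n : ℕ => ((d n : ℝ) : EReal)) := by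
      funext n; simp [EReal.coe_add]
    rw [heq]
    refine le_trans (EReal.limsup_add_le ?_ ?_) ?_
    · left; rw [Filter.limsup_const]; exact EReal.coe_ne_bot c
    · left; rw [Filter.limsup_const]; exact EReal.coe_ne_top c
    · rw [Filter.limsup_const]
  calc Filter.limsup (fun n : ℕ => ((Real.log (r n) / (n * N) : ℝ) : EReal)) atTop
      ≤ Filter.limsup (fun n : ℕ => ((u n : ℝ) : EReal)) atTop +
          Filter.limsup (fun n : ℕ => ((c + d n : ℝ) : EReal)) atTop := le_trans hmono hsum1
    _ ≤ (0 : EReal) + (((c : ℝ) : EReal) +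
          Filter.limsup (fun n : ℕ => ((d n : ℝ) : EReal)) atTop) := by
        rw [hu0]; exact add_le_add_right hsum2 _
    _ = ((c : ℝ) : EReal) + Filter.limsup (fun n : ℕ => ((d n : ℝ) : EReal)) atTop := by
        rw [zero_add]
end
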